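/- arXiv:0708.2230 — 5 statements merged into one kernel-verified Lean document; each statement's English description precedes it below -/
import Mathlib

section
/- If Sort t s is derivable from the program clauses, then (↑t : Multiset α) = ↑s; that is, the multisets of items underlying the input list t and the output list s are equal, so the sorting program neither drops, duplicates, nor creates any elements. -/
inductive AppendP {α : Type*} : List α → List α → List α → Prop
  | nil (k : List α) : AppendP [] k k
  | cons (x : α) {l k m : List α} : AppendP l k m → AppendP (x :: l) k (x :: m)

inductive Split {α : Type*} (leq gr : α → α → Prop) :
    α → List α → List α → List α → Prop
  | nil (x : α) : Split leq gr x [] [] []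
  | small {a x : α} {r s b : List α} :
      leq a x → Split leq gr x r s b → Split leq gr x (a :: r) (a :: s) b
  | big {a x : α} {r s b : List α} :
      gr a x → Split leq gr x r s b → Split leq gr x (a :: r) s (a :: b)

inductive SortP {α : Type*} (leq gr : α → α → Prop) : List α → List α → Prop
  | nil : SortP leq gr [] []
  | cons {f : α} {r sm bg ss bs s : List α} :
      Split leq gr f r sm bg → SortP leq gr sm ss → SortP leq gr bg bs →
      AppendP ss (f :: bs) s → SortP leq gr (f :: r) s

lemma append_ms {α : Type*} {l k m : List α} (h : AppendP l k m) :
    (↑l + ↑k : Multiset α) = ↑m := by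
  induction h with
  | nil => simp
  | cons x _ ih => rw [← Multiset.cons_coe, ← Multiset.cons_coe, ← ih]; rfl

lemma split_ms {α : Type*} {leq gr : α → α → Prop} {x : α} {r s b : List α}
    (h : Split leq gr x r s b) : (↑r : Multiset α) = ↑s + ↑b := by
  induction h with
  | nil => simp
  | small _ _ ih => rw [← Multiset.cons_coe, ← Multiset.cons_coe, ih]; rfl
  | big _ _ ih => rw [← Multiset.cons_coe, ← Multiset.cons_coe, ih]; rw [← Multiset.singleton_add, ← Multiset.singleton_add]; abel

theorem sort_multiset_invariant {α : Type*} (leq gr : α → α → Prop)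
    {t s : List α} (h : SortP leq gr t s) : (↑t : Multiset α) = ↑s := by
  induction h with
  | nil => rfl
  | cons hsp _ _ happ ih1 ih2 =>
    rw [← append_ms happ]
    rw [← Multiset.cons_coe, ← Multiset.cons_coe, split_ms hsp, ih1, ih2]; rw [← Multiset.singleton_add, ← Multiset.singleton_add]; abel
end

section
/- If Sort t s is derivable from the program clauses, then the list s is a permutation of the list t (List.Perm t s). -/
lemma appendP_eq {α : Type*} {l k m : List α} (h : AppendP l k m) : m = l ++ k := by
  induction h with
  | nil => rfl
  | cons x _ ih => simp [ih]

lemma split_perm {α : Type*} {leq gr : α → α → Prop} {x : α} {r s b : List α}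
    (h : Split leq gr x r s b) : List.Perm r (s ++ b) := by
  induction h with
  | nil => simp
  | small _ _ ih => exact ih.cons _
  | big _ _ ih => exact ih.cons _ |>.trans (List.perm_middle.symm)

theorem sort_perm {α : Type*} (leq gr : α → α → Prop)
    {t s : List α} (h : SortP leq gr t s) : List.Perm t s := by
  induction h with
  | nil => exact List.Perm.refl _
  | cons hsp _ _ hap ih1 ih2 =>
    rw [appendP_eq hap]
    exact (((split_perm hsp).trans (ih1.append ih2)).cons _).trans List.perm_middle.symm
end

section
/- If Sort' t s is derivable from the duplicate-dropping sorting program clauses, then t.toFinset = s.toFinset; that is, the sets of items underlying the input list t and the output list s are equal, so the duplicate-dropping sort relates two lists only if they are approximated by the same set. -/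
inductive Split' {α : Type*} (lt gr : α → α → Prop) :
    α → List α → List α → List α → Prop
  | nil (x : α) : Split' lt gr x [] [] []
  | drop {x : α} {r s b : List α} :
      Split' lt gr x r s b → Split' lt gr x (x :: r) s b
  | small {a x : α} {r s b : List α} :
      lt a x → Split' lt gr x r s b → Split' lt gr x (a :: r) (a :: s) b
  | big {a x : α} {r s b : List α} :
      gr a x → Split' lt gr x r s b → Split' lt gr x (a :: r) s (a :: b)

inductive SortP' {α : Type*} (lt gr : α → α → Prop) : List α → List α → Prop
  | nil : SortP' lt gr [] []
  | cons {f : α} {r sm bg ss bs s : List α} :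
      Split' lt gr f r sm bg → SortP' lt gr sm ss → SortP' lt gr bg bs →
      AppendP ss (f :: bs) s → SortP' lt gr (f :: r) s


theorem appendP_finset {α : Type*} [DecidableEq α] {l k m : List α}
    (h : AppendP l k m) : m.toFinset = l.toFinset ∪ k.toFinset := by
  induction h with
  | nil k => simp
  | cons x h ih => simp [ih, Finset.insert_union]

theorem split'_finset {α : Type*} [DecidableEq α] {lt gr : α → α → Prop}
    {x : α} {r s b : List α} (h : Split' lt gr x r s b) :
    insert x r.toFinset = insert x (s.toFinset ∪ b.toFinset) := by
  induction h with
  | nil x => simp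
  | drop h ih => simpa using ih
  | small _ h ih =>
      simp only [List.toFinset_cons, Finset.insert_union]
      rw [Finset.insert_comm, ih, Finset.insert_comm]
  | big _ h ih =>
      simp only [List.toFinset_cons, Finset.union_insert]
      rw [Finset.insert_comm, ih, Finset.insert_comm]

theorem sort'_finset_invariant {α : Type*} [DecidableEq α] (lt gr : α → α → Prop)
    {t s : List α} (h : SortP' lt gr t s) : t.toFinset = s.toFinset := by
  induction h with
  | nil => simp
  | cons hsp _ _ hap ih1 ih2 =>
      rw [appendP_finset hap, List.toFinset_cons, List.toFinset_cons, ← ih1, ← ih2,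
        Finset.union_insert, ← Finset.insert_union]
      rw [Finset.insert_union]
      exact split'_finset hsp
end

section
/- If Traverse t s is derivable from the program clauses, then inorder t = s; that is, the list produced by the rotation-based traversal program is exactly the in-order list of labels of the binary tree, with the same order and multiplicities of elements. -/
inductive BTree (α : Type*)
  | emp : BTree α
  | bt : α → BTree α → BTree α → BTree α

def inorder {α : Type*} : BTree α → List α
  | BTree.emp => []
  | BTree.bt n l r => inorder l ++ n :: inorder r

inductive Traverse {α : Type*} : BTree α → List α → Prop
  | emp : Traverse BTree.emp []
  | leaf {n : α} {r : BTree α} {s : List α} :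
      Traverse r s → Traverse (BTree.bt n BTree.emp r) (n :: s)
  | rot {m n : α} {l1 l2 r : BTree α} {s : List α} :
      Traverse (BTree.bt m l1 (BTree.bt n l2 r)) s →
      Traverse (BTree.bt n (BTree.bt m l1 l2) r) s

theorem traverse_inorder {α : Type*} {t : BTree α} {s : List α}
    (h : Traverse t s) : inorder t = s := by
  induction h with
  | emp => rfl
  | leaf _ ih => simp [inorder, ih]
  | rot _ ih => simp [inorder] at ih ⊢; simpa using ih
end

section
/- Soundness of the Figure 5 proof system for set statements (ground case of Propositions 2 and 3): if every rule (U, V) ∈ Γ satisfies U ⊆ V, then DerSet S T implies S ⊆ T for all finite sets S, T of atoms. -/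
inductive DerAtom {A : Type*} [DecidableEq A] (Γ : Set (Finset A × Finset A)) :
    A → Finset A → Prop
  | oplusR {a : A} {T : Finset A} : a ∈ T → DerAtom Γ a T
  | bc {U V : Finset A} {a : A} {T : Finset A} :
      (U, V) ∈ Γ → a ∈ U → (∀ b ∈ V, DerAtom Γ b T) → DerAtom Γ a T

def DerSet {A : Type*} [DecidableEq A] (Γ : Set (Finset A × Finset A))
    (S T : Finset A) : Prop :=
  ∀ a ∈ S, DerAtom Γ a T

theorem derSet_sound {A : Type*} [DecidableEq A] (Γ : Set (Finset A × Finset A))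
    (hΓ : ∀ p ∈ Γ, p.1 ⊆ p.2) :
    ∀ S T : Finset A, DerSet Γ S T → S ⊆ T := by
  have key : ∀ (a : A) (T : Finset A), DerAtom Γ a T → a ∈ T := by
    intro a T hd
    induction hd with
    | oplusR hm => exact hm
    | bc hUV haU hV ih => exact ih _ (hΓ _ hUV haU)
  intro S T hd a ha
  exact key a T (hd a ha)
end
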